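/- Let (C,R) be a directed graph with ℓ = t = 1 that is not strongly connected and has |C'| = 1. Fix j ∈ C'' such that some arc with tail j leaves the strong component C''(j) containing j, and such that W(j) ⊆ C''(j). Then the sets {U(i) : i ∈ W(j)} are pairwise disjoint and ⋃_{i ∈ W(j)} U(i) = U(C''(j)), where U(C''(j)) = {k ∈ C'' : every directed path from k to C' traverses C''(j)}. -/

import Mathlib

open Finset

/-- Reachability (existence of a directed walk) in the directed graph with arc set `R`. -/
def Reach {c : ℕ} (R : Finset (Fin c × Fin c)) (a b : Fin c) : Prop :=
  Relation.ReflTransGen (fun x y => (x, y) ∈ R) a b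

/-- `p` is a directed path in the graph with arc set `R`. -/
def IsDipath {c : ℕ} (R : Finset (Fin c × Fin c)) (p : List (Fin c)) : Prop :=
  p ≠ [] ∧ p.Nodup ∧ p.Chain' (fun a b => (a, b) ∈ R)

/-- `p` is a directed path from `a` to `b` in the graph with arc set `R`. -/
def IsDipathFromTo {c : ℕ} (R : Finset (Fin c × Fin c)) (p : List (Fin c))
    (a b : Fin c) : Prop :=
  IsDipath R p ∧ p.head? = some a ∧ p.getLast? = some b

/-- There is a directed path from `a` to `b` all of whose intermediate steps stay in `S`
(for `a ∈ S` this says that there is a directed path from `a` to `b` with vertex set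
contained in `S`). -/
def ReachIn {c : ℕ} (R : Finset (Fin c × Fin c)) (S : Finset (Fin c))
    (a b : Fin c) : Prop :=
  Relation.ReflTransGen (fun x y => (x, y) ∈ R ∧ x ∈ S ∧ y ∈ S) a b

/-- The set of arcs of `R` entering the vertex set `U`. -/
def arcsIn {c : ℕ} (R : Finset (Fin c × Fin c)) (U : Finset (Fin c)) :
    Finset (Fin c × Fin c) :=
  R.filter (fun a => a.1 ∉ U ∧ a.2 ∈ U)

/-- The set of arcs of `R` leaving the vertex set `U`. -/
def arcsOut {c : ℕ} (R : Finset (Fin c × Fin c)) (U : Finset (Fin c)) :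
    Finset (Fin c × Fin c) :=
  R.filter (fun a => a.1 ∈ U ∧ a.2 ∉ U)

/-- For a graph whose unique absorbing strong component is `{r}` (so `C'' = C \ {r}`),
`Uset R r i = U(i) = {k ∈ C : every directed path from k to r traverses i}`. -/
noncomputable def Uset {c : ℕ} (R : Finset (Fin c × Fin c)) (r i : Fin c) :
    Finset (Fin c) :=
  @Finset.filter _ (fun k => ∀ p : List (Fin c), IsDipathFromTo R p k r → i ∈ p)
    (Classical.decPred _) Finset.univ

/-- `U ∈ C''_{j-inarb}`: `U ⊆ C'' = C \ {r}`, every vertex of `U` has a directed path to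
`j` with vertex set contained in `U`, and every vertex of `C'' \ U` has a directed path
to `C' = {r}` with vertex set contained in `C \ U`. -/
def Jinarb {c : ℕ} (R : Finset (Fin c × Fin c)) (r j : Fin c)
    (U : Finset (Fin c)) : Prop :=
  U ⊆ Finset.univ.erase r ∧
    (∀ i' ∈ U, ReachIn R U i' j) ∧
    (∀ i' ∈ Finset.univ.erase r \ U, ReachIn R (Finset.univ \ U) i' r)

/-- The vertex set of the strong component of the graph containing `j`. -/
noncomputable def SCC {c : ℕ} (R : Finset (Fin c × Fin c)) (j : Fin c) :
    Finset (Fin c) :=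
  @Finset.filter _ (fun k => Reach R j k ∧ Reach R k j) (Classical.decPred _) Finset.univ

/-- `I` is a subset of `C'' = C \ {r}` such that the sets `U(i)`, `i ∈ I`, are pairwise
disjoint with union `U`. -/
def IsPartitionInto {c : ℕ} (R : Finset (Fin c × Fin c)) (r : Fin c)
    (U I : Finset (Fin c)) : Prop :=
  I ⊆ Finset.univ.erase r ∧
    (↑I : Set (Fin c)).PairwiseDisjoint (fun i => Uset R r i) ∧
    U = I.biUnion (Uset R r)

/-- `W(j) = ⋃_{U ∈ C''_{j-inarb}} I_U`, where `I_U` is the unique subset of `C''` with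
`U = ⋃*_{i ∈ I_U} U(i)` (pairwise disjoint union). -/
def Wset {c : ℕ} (R : Finset (Fin c × Fin c)) (r j : Fin c) : Set (Fin c) :=
  {i | ∃ U I : Finset (Fin c), Jinarb R r j U ∧ IsPartitionInto R r U I ∧ i ∈ I}

/-- `U(C''(j)) = {k ∈ C'' : every directed path from k to r traverses C''(j)}`. -/
noncomputable def UsetSC {c : ℕ} (R : Finset (Fin c × Fin c)) (r j : Fin c) :
    Finset (Fin c) :=
  @Finset.filter _
    (fun k => ∀ p : List (Fin c), IsDipathFromTo R p k r → ∃ x ∈ p, x ∈ SCC R j)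
    (Classical.decPred _) (Finset.univ.erase r)

section Helpers
variable {c : ℕ} {R : Finset (Fin c × Fin c)} {S : Finset (Fin c)} {a b v r i i' k l : Fin c}
  {p : List (Fin c)}

lemma dipath_singleton : IsDipathFromTo R [a] a a :=
  ⟨⟨by simp, by simp, List.isChain_singleton _⟩, rfl, rfl⟩

lemma dipath_head_mem (h : IsDipathFromTo R p a b) : a ∈ p :=
  List.mem_of_mem_head? (by rw [h.2.1]; rfl)

lemma dipath_last_mem (h : IsDipathFromTo R p a b) : b ∈ p :=
  List.mem_of_mem_getLast? (by rw [h.2.2]; rfl)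

lemma dipath_split (h : IsDipathFromTo R p a b) (hv : v ∈ p) :
    ∃ q₁ q₂ : List (Fin c), IsDipathFromTo R q₁ a v ∧ IsDipathFromTo R q₂ v b ∧
      (∀ x ∈ q₁, x ∈ p) ∧ (∀ x ∈ q₂, x ∈ p) ∧ (∀ x ∈ p, x ∈ q₁ ∨ x ∈ q₂) ∧
      (∀ x, x ∈ q₁ → x ∈ q₂ → x = v) := by
  obtain ⟨s, t, rfl⟩ := List.append_of_mem hv
  obtain ⟨⟨hne, hnd, hch⟩, hhd, hlast⟩ := h
  refine ⟨s ++ [v], v :: t, ?_, ?_, ?_, ?_, ?_, ?_⟩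
  · refine ⟨⟨by simp, ?_, ?_⟩, ?_, ?_⟩
    · exact ((List.append_sublist_append_left s).2 (by simp)).nodup hnd
    · have : s ++ v :: t = (s ++ [v]) ++ t := by simp
      rw [this, List.Chain', List.isChain_append] at hch
      exact hch.1
    · rw [← hhd]; rw [List.head?_append, List.head?_append]; rfl
    · rw [List.getLast?_append]; rfl
  · refine ⟨⟨by simp, ?_, ?_⟩, rfl, ?_⟩
    · exact (List.sublist_append_right s _).nodup hnd
    · rw [List.Chain', List.isChain_append] at hch
      exact hch.2.1
    · rw [← hlast, List.getLast?_append]; rfl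
  · intro x hx
    simp only [List.mem_append, List.mem_cons, List.mem_singleton] at hx ⊢
    tauto
  · intro x hx
    simp only [List.mem_append, List.mem_cons] at hx ⊢
    tauto
  · intro x hx
    simp only [List.mem_append, List.mem_cons, List.mem_singleton] at hx ⊢
    tauto
  · intro x hx1 hx2
    rw [List.nodup_append] at hnd
    simp only [List.mem_append, List.mem_singleton] at hx1
    rcases hx1 with hs | rfl
    · exact absurd hx2 (fun h => hnd.2.2 _ hs _ h rfl)
    · rfl

lemma dipath_toReachIn (h : IsDipathFromTo R p a b) (hS : ∀ x ∈ p, x ∈ S) :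
    ReachIn R S a b := by
  induction p generalizing a with
  | nil => exact absurd h.2.1 (by simp)
  | cons hd tl ih =>
    obtain ⟨⟨-, hnd, hch⟩, hhd, hlast⟩ := h
    have ha : a = hd := by simpa using hhd.symm
    subst ha
    match tl with
    | [] =>
      have : a = b := by simpa using hlast
      subst this; exact Relation.ReflTransGen.refl
    | w :: t =>
      rw [List.Chain', List.isChain_cons_cons] at hch
      have htl : IsDipathFromTo R (w :: t) w b :=
        ⟨⟨by simp, hnd.of_cons, hch.2⟩, rfl, by
          rw [← hlast]; rw [show a :: w :: t = [a] ++ (w :: t) by simp,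
            List.getLast?_append]; rfl⟩
      exact Relation.ReflTransGen.head
        ⟨hch.1, hS _ (by simp), hS _ (by simp)⟩
        (ih htl (fun x hx => hS x (by simp [hx])))

lemma reachIn_toDipath (h : ReachIn R S a b) (ha : a ∈ S) :
    ∃ p, IsDipathFromTo R p a b ∧ ∀ x ∈ p, x ∈ S := by
  induction h with
  | refl => exact ⟨[a], dipath_singleton, by simpa using ha⟩
  | tail _ hstep ih =>
    rename_i b' b _
    obtain ⟨p, hp, hpS⟩ := ih
    by_cases hb : b ∈ p
    · obtain ⟨q₁, -, h1, -, hq1p, -, -, -⟩ := dipath_split hp hb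
      exact ⟨q₁, h1, fun x hx => hpS x (hq1p x hx)⟩
    · refine ⟨p ++ [b], ⟨⟨by simp, ?_, ?_⟩, ?_, ?_⟩, ?_⟩
      · rw [List.nodup_append]
        refine ⟨hp.1.2.1, by simp, ?_⟩
        intro x hx y hx' hxy
        simp only [List.mem_singleton] at hx'
        subst hx'
        subst hxy
        exact absurd hx hb
      · rw [List.Chain', List.isChain_append]
        refine ⟨hp.1.2.2, by simp, ?_⟩
        intro x hx y hy
        rw [hp.2.2] at hx
        simp only [Option.mem_def, Option.some_inj] at hx
        simp only [List.head?_cons, Option.mem_def, Option.some_inj] at hy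
        subst hx; subst hy
        exact hstep.1
      · rw [List.head?_append, hp.2.1]; rfl
      · rw [List.getLast?_append]; rfl
      · intro x hx
        rcases List.mem_append.1 hx with h | h
        · exact hpS x h
        · simp only [List.mem_singleton] at h
          subst h; exact hstep.2.2

lemma reach_toDipath (h : Reach R a b) : ∃ p, IsDipathFromTo R p a b := by
  have h' : ReachIn R Finset.univ a b :=
    Relation.ReflTransGen.mono (fun x y hxy => ⟨hxy, mem_univ _, mem_univ _⟩) _ _ h
  obtain ⟨p, hp, -⟩ := reachIn_toDipath h' (mem_univ a)
  exact ⟨p, hp⟩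

lemma dipath_toReach (h : IsDipathFromTo R p a b) : Reach R a b := by
  have := dipath_toReachIn (S := Finset.univ) h (fun x _ => mem_univ x)
  exact Relation.ReflTransGen.mono (fun x y hxy => hxy.1) _ _ this

lemma reachIn_mem_right (h : ReachIn R S a b) (ha : a ∈ S) : b ∈ S := by
  induction h with
  | refl => exact ha
  | tail _ hstep _ => exact hstep.2.2

lemma mem_uset : k ∈ Uset R r i ↔ ∀ p, IsDipathFromTo R p k r → i ∈ p := by
  simp [Uset, Finset.mem_filter]

lemma self_mem_uset : i ∈ Uset R r i :=
  mem_uset.2 fun _ hp => dipath_head_mem hp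

lemma eq_r_of_r_mem_uset (h : r ∈ Uset R r i) : i = r := by
  have := mem_uset.1 h [r] dipath_singleton
  simpa using this

lemma not_mem_uset : k ∉ Uset R r i ↔ ∃ p, IsDipathFromTo R p k r ∧ i ∉ p := by
  rw [mem_uset]; push_neg; rfl

lemma uset_sub (h : i ∈ Uset R r l) : Uset R r i ⊆ Uset R r l := by
  intro k hk
  rw [mem_uset] at hk ⊢
  intro p hp
  obtain ⟨-, q₂, -, h2, -, hq2p, -, -⟩ := dipath_split hp (hk p hp)
  exact hq2p _ (mem_uset.1 h q₂ h2)

lemma uset_antisym (hir : Reach R i r) (h1 : i ∈ Uset R r i') (h2 : i' ∈ Uset R r i) :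
    i = i' := by
  obtain ⟨p, hp⟩ := reach_toDipath hir
  have hi' : i' ∈ p := mem_uset.1 h1 p hp
  obtain ⟨q₁, q₂, h1', h2', -, -, -, hint⟩ := dipath_split hp hi'
  exact hint i (dipath_head_mem h1') (mem_uset.1 h2 q₂ h2')

end Helpers


section Helpers2
variable {c : ℕ} {R : Finset (Fin c × Fin c)} {S T : Finset (Fin c)}
  {a b v r i i' j k l y : Fin c} {p : List (Fin c)}

lemma reachIn_mono (hST : S ⊆ T) (h : ReachIn R S a b) : ReachIn R T a b :=
  Relation.ReflTransGen.mono (fun x y hxy => ⟨hxy.1, hST hxy.2.1, hST hxy.2.2⟩) _ _ h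

lemma mem_scc : k ∈ SCC R j ↔ Reach R j k ∧ Reach R k j := by
  simp [SCC, Finset.mem_filter]

lemma reach_from_r (habs : ∀ q ∈ R, q.1 ≠ r) (h : Reach R r k) : k = r := by
  induction h with
  | refl => rfl
  | tail _ hstep ih => exact absurd ih (habs _ hstep)

lemma r_not_mem_scc (habs : ∀ q ∈ R, q.1 ≠ r) (hj : j ≠ r) : r ∉ SCC R j := by
  intro h
  exact hj (reach_from_r habs (mem_scc.1 h).2)

lemma scc_reachIn (h : k ∈ SCC R j) : ReachIn R (SCC R j) k j := by
  obtain ⟨hjk, hkj⟩ := mem_scc.1 h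
  clear h
  revert hjk
  induction hkj using Relation.ReflTransGen.head_induction_on with
  | refl => intro _; exact Relation.ReflTransGen.refl
  | head hstep hrest ih =>
    rename_i x z
    intro hjx
    have hjz : Reach R j z := hjx.tail hstep
    exact Relation.ReflTransGen.head
      ⟨hstep, mem_scc.2 ⟨hjx, Relation.ReflTransGen.head hstep hrest⟩,
        mem_scc.2 ⟨hjz, hrest⟩⟩ (ih hjz)

lemma mem_usetSC : k ∈ UsetSC R r j ↔
    k ≠ r ∧ ∀ p, IsDipathFromTo R p k r → ∃ x ∈ p, x ∈ SCC R j := by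
  simp [UsetSC, Finset.mem_filter, Finset.mem_erase]

lemma scc_subset_usetSC (habs : ∀ q ∈ R, q.1 ≠ r) (hj : j ≠ r) :
    SCC R j ⊆ UsetSC R r j := by
  intro z hz
  refine mem_usetSC.2 ⟨?_, fun p hp => ⟨z, dipath_head_mem hp, hz⟩⟩
  rintro rfl
  exact r_not_mem_scc habs hj hz

lemma uset_subset_usetSC (hi : i ∈ UsetSC R r j) : Uset R r i ⊆ UsetSC R r j := by
  intro k hk
  have hir : i ≠ r := (mem_usetSC.1 hi).1
  refine mem_usetSC.2 ⟨?_, ?_⟩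
  · rintro rfl
    exact hir (eq_r_of_r_mem_uset hk)
  · intro p hp
    obtain ⟨-, q₂, -, h2, -, hq2p, -, -⟩ := dipath_split hp (mem_uset.1 hk p hp)
    obtain ⟨x, hxq, hxscc⟩ := (mem_usetSC.1 hi).2 q₂ h2
    exact ⟨x, hq2p x hxq, hxscc⟩

lemma uset_laminar (hkr : Reach R k r) (h1 : k ∈ Uset R r i) (h2 : k ∈ Uset R r i') :
    i ∈ Uset R r i' ∨ i' ∈ Uset R r i := by
  by_contra hc
  push_neg at hc
  obtain ⟨hni, hni'⟩ := hc
  have hii' : i ≠ i' := by rintro rfl; exact hni self_mem_uset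
  obtain ⟨d, hd, hdni'⟩ := not_mem_uset.1 hni
  obtain ⟨d', hd', hdni⟩ := not_mem_uset.1 hni'
  obtain ⟨p, hp⟩ := reach_toDipath hkr
  have hip : i ∈ p := mem_uset.1 h1 p hp
  have hi'p : i' ∈ p := mem_uset.1 h2 p hp
  obtain ⟨q₁, q₂, hq1, hq2, hq1p, hq2p, hcov, hint⟩ := dipath_split hp hip
  by_cases hc1 : i' ∈ q₁
  · obtain ⟨s₁, s₂, hs1, hs2, hs1q, hs2q, hscov, hsint⟩ := dipath_split hq1 hc1
    have hins1 : i ∉ s₁ := fun hi_s1 => hii' (hsint i hi_s1 (dipath_last_mem hs2))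
    have r1 : ReachIn R (Finset.univ.erase i) k i' :=
      dipath_toReachIn hs1
        (fun x hx => Finset.mem_erase.2 ⟨fun e => hins1 (e ▸ hx), Finset.mem_univ _⟩)
    have r2 : ReachIn R (Finset.univ.erase i) i' r :=
      dipath_toReachIn hd'
        (fun x hx => Finset.mem_erase.2 ⟨fun e => hdni (e ▸ hx), Finset.mem_univ _⟩)
    have hk_ne : k ≠ i := by rintro rfl; exact hni h2
    obtain ⟨pp, hpp, hppS⟩ := reachIn_toDipath (r1.trans r2)
      (Finset.mem_erase.2 ⟨hk_ne, Finset.mem_univ _⟩)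
    exact absurd rfl (Finset.mem_erase.1 (hppS i (mem_uset.1 h1 pp hpp))).1
  · have r1 : ReachIn R (Finset.univ.erase i') k i :=
      dipath_toReachIn hq1
        (fun x hx => Finset.mem_erase.2 ⟨fun e => hc1 (e ▸ hx), Finset.mem_univ _⟩)
    have r2 : ReachIn R (Finset.univ.erase i') i r :=
      dipath_toReachIn hd
        (fun x hx => Finset.mem_erase.2 ⟨fun e => hdni' (e ▸ hx), Finset.mem_univ _⟩)
    have hk_ne : k ≠ i' := by rintro rfl; exact hni' h1
    obtain ⟨pp, hpp, hppS⟩ := reachIn_toDipath (r1.trans r2)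
      (Finset.mem_erase.2 ⟨hk_ne, Finset.mem_univ _⟩)
    exact absurd rfl (Finset.mem_erase.1 (hppS i' (mem_uset.1 h2 pp hpp))).1

lemma usetSC_reachIn (habs : ∀ q ∈ R, q.1 ≠ r) (hj : j ≠ r)
    (h : IsDipathFromTo R p a r) (ha : a ∈ UsetSC R r j) :
    ReachIn R (UsetSC R r j) a j := by
  induction p generalizing a with
  | nil => exact absurd h.2.1 (by simp)
  | cons hd tl ih =>
    have hhd : a = hd := by
      have := h.2.1; simp only [List.head?_cons, Option.some_inj] at this
      exact this.symm
    subst hhd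
    by_cases hscc : a ∈ SCC R j
    · exact reachIn_mono (scc_subset_usetSC habs hj) (scc_reachIn hscc)
    · have har : a ≠ r := (mem_usetSC.1 ha).1
      match tl with
      | [] =>
        have : a = r := by
          have := h.2.2; simpa using this
        exact absurd this har
      | w :: t =>
        have arc : (a, w) ∈ R := (List.isChain_cons_cons.1 h.1.2.2).1
        by_cases hwr : w = r
        · subst hwr
          have hp' : IsDipathFromTo R [a, w] a w :=
            ⟨⟨by simp, by simp [har], by simp [List.Chain', arc]⟩, rfl, rfl⟩
          obtain ⟨x, hx, hxscc⟩ := (mem_usetSC.1 ha).2 _ hp'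
          rcases by simpa using hx with rfl | rfl
          · exact absurd hxscc hscc
          · exact absurd hxscc (r_not_mem_scc habs hj)
        · have hw : w ∈ UsetSC R r j := by
            refine mem_usetSC.2 ⟨hwr, ?_⟩
            intro q hq
            by_cases haq : a ∈ q
            · obtain ⟨-, q₂, -, h2, -, hq2q, -, -⟩ := dipath_split hq haq
              obtain ⟨x, hxq, hxscc⟩ := (mem_usetSC.1 ha).2 q₂ h2
              exact ⟨x, hq2q x hxq, hxscc⟩
            · have hq' : IsDipathFromTo R (a :: q) a r := by
                refine ⟨⟨by simp, ?_, ?_⟩, rfl, ?_⟩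
                · exact List.nodup_cons.2 ⟨haq, hq.1.2.1⟩
                · refine List.isChain_cons.2 ⟨?_, hq.1.2.2⟩
                  intro z hz
                  rw [hq.2.1] at hz
                  simp only [Option.mem_def, Option.some_inj] at hz
                  subst hz; exact arc
                · rw [show a :: q = [a] ++ q by simp, List.getLast?_append, hq.2.2]; rfl
              obtain ⟨x, hx, hxscc⟩ := (mem_usetSC.1 ha).2 _ hq'
              rcases List.mem_cons.1 hx with rfl | hxq
              · exact absurd hxscc hscc
              · exact ⟨x, hxq, hxscc⟩
          have htl : IsDipathFromTo R (w :: t) w r := by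
            refine ⟨⟨by simp, h.1.2.1.of_cons, (List.isChain_cons_cons.1 h.1.2.2).2⟩, rfl, ?_⟩
            have := h.2.2
            rw [List.getLast?_cons_cons] at this
            exact this
          exact Relation.ReflTransGen.head ⟨arc, ha, hw⟩ (ih htl hw)

lemma usetSC_avoid (hi' : i' ∈ Finset.univ.erase r \ UsetSC R r j) :
    ReachIn R (Finset.univ \ UsetSC R r j) i' r := by
  obtain ⟨hi'e, hi'n⟩ := Finset.mem_sdiff.1 hi'
  have hne : i' ≠ r := (Finset.mem_erase.1 hi'e).1
  have hex : ∃ p, IsDipathFromTo R p i' r ∧ ∀ x ∈ p, x ∉ SCC R j := by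
    by_contra hcon
    push_neg at hcon
    exact hi'n (mem_usetSC.2 ⟨hne, fun p hp => hcon p hp⟩)
  obtain ⟨p, hp, hpS⟩ := hex
  refine dipath_toReachIn hp ?_
  intro x hx
  rw [Finset.mem_sdiff]
  refine ⟨Finset.mem_univ _, fun hxU => ?_⟩
  obtain ⟨-, q₂, -, h2, -, hq2p, -, -⟩ := dipath_split hp hx
  obtain ⟨z, hz1, hz2⟩ := (mem_usetSC.1 hxU).2 q₂ h2
  exact hpS z (hq2p z hz1) hz2

lemma usetSC_partition (habs : ∀ q ∈ R, q.1 ≠ r) (hj : j ≠ r)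
    (hreach : ∀ k : Fin c, Reach R k r) :
    ∃ I : Finset (Fin c), IsPartitionInto R r (UsetSC R r j) I ∧ I ⊆ UsetSC R r j := by
  classical
  set W := UsetSC R r j with hW
  set I := W.filter (fun i => ∀ l ∈ W, i ∈ Uset R r l → l = i) with hI
  have hIW : I ⊆ W := Finset.filter_subset _ _
  have hcover : ∀ k ∈ W, ∃ i ∈ I, k ∈ Uset R r i := by
    intro k hk
    set D := W.filter (fun i => k ∈ Uset R r i) with hD
    have hDne : D.Nonempty := ⟨k, Finset.mem_filter.2 ⟨hk, self_mem_uset⟩⟩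
    obtain ⟨m, hmD, hmax⟩ := Finset.exists_max_image D (fun i => (Uset R r i).card) hDne
    obtain ⟨hmW, hkm⟩ := Finset.mem_filter.1 hmD
    refine ⟨m, Finset.mem_filter.2 ⟨hmW, ?_⟩, hkm⟩
    intro l hlW hml
    by_contra hlm
    have hsub : Uset R r m ⊆ Uset R r l := uset_sub hml
    have hlD : l ∈ D := Finset.mem_filter.2 ⟨hlW, hsub hkm⟩
    have hstrict : Uset R r m ⊂ Uset R r l := by
      refine ⟨hsub, fun hba => ?_⟩
      exact hlm (uset_antisym (hreach l) (hba self_mem_uset) hml)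
    exact absurd (hmax l hlD) (not_le.2 (Finset.card_lt_card hstrict))
  have hsub : I ⊆ Finset.univ.erase r := hIW.trans (Finset.filter_subset _ _)
  have hpd : (↑I : Set (Fin c)).PairwiseDisjoint (fun i => Uset R r i) := ?_
  rotate_left
  · intro x hx y hy hxy
    refine Finset.disjoint_left.2 ?_
    intro k hk1 hk2
    have hxI := Finset.mem_coe.1 hx
    have hyI := Finset.mem_coe.1 hy
    rcases uset_laminar (hreach k) hk1 hk2 with hxy' | hxy'
    · exact hxy ((Finset.mem_filter.1 hxI).2 y (hIW hyI) hxy').symm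
    · exact hxy ((Finset.mem_filter.1 hyI).2 x (hIW hxI) hxy')
  · have hun : W = I.biUnion (Uset R r) := by
      ext k
      rw [Finset.mem_biUnion]
      constructor
      · exact hcover k
      · rintro ⟨i, hiI, hki⟩
        exact uset_subset_usetSC (hIW hiI) hki
    exact ⟨I, ⟨hsub, hpd, hun⟩, hIW⟩

end Helpers2


section Final
variable {c : ℕ} {R : Finset (Fin c × Fin c)} {r i i' j k y : Fin c}

lemma wset_dom (habs : ∀ q ∈ R, q.1 ≠ r) (hreach : ∀ k : Fin c, Reach R k r)
    (hj : j ≠ r) (harc : (j, y) ∈ R) (hy : y ∉ SCC R j)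
    (hWj : Wset R r j ⊆ ↑(SCC R j))
    (hi : i ∈ Wset R r j) (hi' : i' ∈ Wset R r j) (hU : i ∈ Uset R r i') : i = i' := by
  by_contra hne
  have hi'S : i' ∈ SCC R j := hWj hi'
  obtain ⟨U, I, hJ, hP, hiI⟩ := hi
  have hiU : i ∈ U := by
    rw [hP.2.2]; exact Finset.mem_biUnion.2 ⟨i, hiI, self_mem_uset⟩
  by_cases hi'U : i' ∈ U
  · rw [hP.2.2] at hi'U
    obtain ⟨l, hlI, hi'l⟩ := Finset.mem_biUnion.1 hi'U
    by_cases hli : l = i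
    · subst hli
      exact hne (uset_antisym (hreach _) hU hi'l)
    · have hdisj := hP.2.1 (Finset.mem_coe.2 hiI) (Finset.mem_coe.2 hlI)
        (fun h => hli h.symm)
      exact Finset.disjoint_left.1 hdisj self_mem_uset (uset_sub hi'l hU)
  · have hrIU : ReachIn R U i j := hJ.2.1 i hiU
    have hjU : j ∈ U := reachIn_mem_right hrIU hiU
    have hUe : U ⊆ Finset.univ.erase i' := fun u hu =>
      Finset.mem_erase.2 ⟨fun e => hi'U (e ▸ hu), Finset.mem_univ _⟩
    have hyne : y ∉ Uset R r i' := by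
      intro hyU
      obtain ⟨py, hpy⟩ := reach_toDipath (hreach y)
      obtain ⟨q₁, -, hq1, -, -, -, -, -⟩ := dipath_split hpy (mem_uset.1 hyU py hpy)
      have hyj : Reach R y j := (dipath_toReach hq1).trans (mem_scc.1 hi'S).2
      exact hy (mem_scc.2 ⟨Relation.ReflTransGen.single harc, hyj⟩)
    obtain ⟨d, hd, hdni⟩ := not_mem_uset.1 hyne
    have r1 : ReachIn R (Finset.univ.erase i') i j := reachIn_mono hUe hrIU
    have r2 : ReachIn R (Finset.univ.erase i') i y :=
      r1.tail ⟨harc, hUe hjU,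
        Finset.mem_erase.2 ⟨fun e => hy (by rw [e]; exact hi'S), Finset.mem_univ _⟩⟩
    have r3 : ReachIn R (Finset.univ.erase i') y r :=
      dipath_toReachIn hd
        (fun x hx => Finset.mem_erase.2 ⟨fun e => hdni (e ▸ hx), Finset.mem_univ _⟩)
    obtain ⟨pp, hpp, hppS⟩ := reachIn_toDipath (r2.trans r3)
      (Finset.mem_erase.2 ⟨hne, Finset.mem_univ _⟩)
    exact absurd rfl (Finset.mem_erase.1 (hppS i' (mem_uset.1 hU pp hpp))).1

end Final


theorem stmt17 {c : ℕ}
    (R : Finset (Fin c × Fin c)) (hloop : ∀ v : Fin c, (v, v) ∉ R)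
    -- `{r} = C'` is the vertex set of the unique absorbing strong component (`ℓ = t = 1`):
    (r : Fin c)
    (habs : ∀ p ∈ R, p.1 ≠ r)
    (hreach : ∀ k : Fin c, Reach R k r)
    (hweak : ∀ a b : Fin c,
      Relation.ReflTransGen (fun x y => (x, y) ∈ R ∨ (y, x) ∈ R) a b)
    (hnsc : ¬ ∀ a b : Fin c, Reach R a b)
    (j : Fin c) (hj : j ≠ r)
    -- some arc with tail `j` leaves the strong component `C''(j)` containing `j`:
    (hout : (arcsOut R {j} ∩ arcsOut R (SCC R j)).Nonempty)
    (hWj : Wset R r j ⊆ ↑(SCC R j)) :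
    (Wset R r j).PairwiseDisjoint (fun i => ((Uset R r i : Finset (Fin c)) : Set (Fin c))) ∧
    (⋃ i ∈ Wset R r j, ((Uset R r i : Finset (Fin c)) : Set (Fin c))) = ↑(UsetSC R r j) := by
  obtain ⟨e, he⟩ := hout
  rw [Finset.mem_inter] at he
  have he1 := Finset.mem_filter.1 he.1
  have he2 := Finset.mem_filter.1 he.2
  have hej : e.1 = j := by simpa using he1.2.1
  have harc : (j, e.2) ∈ R := by rw [← hej]; exact he1.1
  have hy : e.2 ∉ SCC R j := he2.2.2
  constructor
  · intro i hi i' hi' hne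
    simp only [Function.onFun]
    rw [Set.disjoint_left]
    intro k hk1 hk2
    rw [Finset.mem_coe] at hk1 hk2
    rcases uset_laminar (hreach k) hk1 hk2 with h | h
    · exact hne (wset_dom habs hreach hj harc hy hWj hi hi' h)
    · exact hne (wset_dom habs hreach hj harc hy hWj hi' hi h).symm
  · ext k
    simp only [Set.mem_iUnion, Finset.mem_coe]
    constructor
    · rintro ⟨i, hiW, hk⟩
      obtain ⟨U, I, hJ, hP, hiI⟩ := hiW
      have hir : i ≠ r := (Finset.mem_erase.1 (hP.1 hiI)).1
      refine mem_usetSC.2 ⟨?_, ?_⟩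
      · rintro rfl; exact hir (eq_r_of_r_mem_uset hk)
      · intro p hp
        have hiS : i ∈ SCC R j := hWj ⟨U, I, hJ, hP, hiI⟩
        exact ⟨i, mem_uset.1 hk p hp, hiS⟩
    · intro hk
      obtain ⟨I, hPI, hIW⟩ := usetSC_partition habs hj hreach
      have hJ : Jinarb R r j (UsetSC R r j) :=
        ⟨fun x hx => Finset.mem_erase.2 ⟨(mem_usetSC.1 hx).1, Finset.mem_univ _⟩,
          fun i' hi' => by
            obtain ⟨p, hp⟩ := reach_toDipath (hreach i')
            exact usetSC_reachIn habs hj hp hi',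
          fun i' hi' => usetSC_avoid hi'⟩
      have hkb : k ∈ I.biUnion (Uset R r) := hPI.2.2 ▸ hk
      obtain ⟨i, hiI, hki⟩ := Finset.mem_biUnion.1 hkb
      exact ⟨i, ⟨UsetSC R r j, I, hJ, hPI, hiI⟩, hki⟩
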